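/- Let μ₁, μ₂, τ₁, τ₂, η, σ ∈ ℂ with σ ≠ 0, η ≠ 0 and τ₁ ≠ τ₂. Set p₁ = σ and p₂ = μ₁μ₂/σ. Then the Bethe (vacuum) equation τ₁(μ₁ − ησ)(μ₂ − ησ) = τ₂(ημ₁ − σ)(ημ₂ − σ) holds if and only if ((ητ₁ − η⁻¹τ₂)/(τ₁ − τ₂))·p₁ + ((ητ₂ − η⁻¹τ₁)/(τ₂ − τ₁))·p₂ = μ₁ + μ₂. (Moreover p₁p₂ = μ₁μ₂ holds by construction, so the Bethe equation for T[U(2)] is equivalent to the two-body trigonometric Ruijsenaars–Schneider spectral relations in the electric frame.) -/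

import Mathlib

/-- **Electric frame for T[U(2)]**: with momenta `p₁ = σ`, `p₂ = μ₁μ₂/σ`, the Bethe
equation is equivalent to the two-body trigonometric Ruijsenaars–Schneider relation,
and `p₁ p₂ = μ₁ μ₂` holds by construction. -/
theorem tu2_electric_frame (μ₁ μ₂ τ₁ τ₂ η σ : ℂ) (hσ : σ ≠ 0) (hη : η ≠ 0)
    (hτ : τ₁ ≠ τ₂) :
    (τ₁ * (μ₁ - η * σ) * (μ₂ - η * σ) = τ₂ * (η * μ₁ - σ) * (η * μ₂ - σ) ↔
      (η * τ₁ - η⁻¹ * τ₂) / (τ₁ - τ₂) * σ +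
        (η * τ₂ - η⁻¹ * τ₁) / (τ₂ - τ₁) * (μ₁ * μ₂ / σ) = μ₁ + μ₂) ∧
    σ * (μ₁ * μ₂ / σ) = μ₁ * μ₂ := by
  have hd : τ₁ - τ₂ ≠ 0 := sub_ne_zero.mpr hτ
  have hd2 : τ₂ - τ₁ ≠ 0 := sub_ne_zero.mpr (Ne.symm hτ)
  refine ⟨⟨fun h => ?_, fun h => ?_⟩, by field_simp⟩
  · field_simp
    linear_combination (τ₂ - τ₁) * h
  · field_simp at h
    have h2 : η * (τ₂ - τ₁) * (τ₁ * (μ₁ - η * σ) * (μ₂ - η * σ)) =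
        η * (τ₂ - τ₁) * (τ₂ * (η * μ₁ - σ) * (η * μ₂ - σ)) := by linear_combination η * h
    exact mul_left_cancel₀ (mul_ne_zero hη hd2) h2
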